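/- Let X be a Polish space with its Borel σ-algebra and d : X × X → ℝ≥0∞ a Borel measurable cost function that is a (possibly extended-valued) pseudometric: d(x,x) = 0, d is symmetric, and d(x,x'') ≤ d(x,x') + d(x',x'') for all x, x', x''. Then the Wasserstein cost W(d) is a pseudometric on the space of Borel probability measures on X: W(d)(μ,μ) = 0, W(d)(μ,ν) = W(d)(ν,μ), and W(d)(μ,ρ) ≤ W(d)(μ,ν) + W(d)(ν,ρ) for all Borel probability measures μ, ν, ρ on X. -/

import Mathlib

open MeasureTheory ProbabilityTheory
open scoped ENNReal

/-- The Wasserstein (Kantorovich) cost: infimum of the transport cost over all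
couplings of `μ` and `ν`. -/
noncomputable def wassersteinCost {Z : Type*} [MeasurableSpace Z]
    (c : Z × Z → ℝ≥0∞) (μ ν : Measure Z) : ℝ≥0∞ :=
  ⨅ (S : Measure (Z × Z)) (_ : IsProbabilityMeasure S)
    (_ : S.map Prod.fst = μ) (_ : S.map Prod.snd = ν), ∫⁻ p, c p ∂S

private lemma wassersteinCost_le_coupling {Z : Type*} [MeasurableSpace Z]
    (c : Z × Z → ℝ≥0∞) {μ ν : Measure Z} (S : Measure (Z × Z))
    (hS : IsProbabilityMeasure S) (h1 : S.map Prod.fst = μ) (h2 : S.map Prod.snd = ν) :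
    wassersteinCost c μ ν ≤ ∫⁻ p, c p ∂S :=
  iInf_le_of_le S (iInf_le_of_le hS (iInf_le_of_le h1 (iInf_le _ h2)))

private lemma wassersteinCost_symm_le {Z : Type*} [MeasurableSpace Z]
    (d : Z × Z → ℝ≥0∞) (hd : Measurable d) (h_symm : ∀ x x', d (x, x') = d (x', x))
    (μ ν : Measure Z) :
    wassersteinCost d μ ν ≤ wassersteinCost d ν μ := by
  unfold wassersteinCost
  refine le_iInf fun S => le_iInf fun hS => le_iInf fun hf => le_iInf fun hs => ?_
  haveI := hS
  have hswap : Measurable (Prod.swap : Z × Z → Z × Z) := measurable_swap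
  refine le_trans (wassersteinCost_le_coupling d (S.map Prod.swap)
    (Measure.isProbabilityMeasure_map hswap.aemeasurable) ?_ ?_) ?_
  · rw [Measure.map_map measurable_fst hswap,
      show (Prod.fst ∘ (Prod.swap : Z × Z → Z × Z)) = Prod.snd from rfl]
    exact hs
  · rw [Measure.map_map measurable_snd hswap,
      show (Prod.snd ∘ (Prod.swap : Z × Z → Z × Z)) = Prod.fst from rfl]
    exact hf
  · rw [lintegral_map hd hswap]
    exact le_of_eq (lintegral_congr fun p => by show d (p.2, p.1) = d p; rw [h_symm])

/-- Gluing lemma: from a coupling of `(μ, ν)` and a coupling of `(ν, ρ)` one builds a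
coupling of `(μ, ρ)` whose cost is at most the sum of the costs. -/
private lemma wassersteinCost_glue
    {X : Type*} [TopologicalSpace X] [PolishSpace X] [MeasurableSpace X] [BorelSpace X]
    (d : X × X → ℝ≥0∞) (hd : Measurable d)
    (h_triangle : ∀ x x' x'', d (x, x'') ≤ d (x, x') + d (x', x''))
    {μ ν ρ : Measure X}
    (S₁ S₂ : Measure (X × X)) (hS₁ : IsProbabilityMeasure S₁) (hS₂ : IsProbabilityMeasure S₂)
    (h₁f : S₁.map Prod.fst = μ) (h₁s : S₁.map Prod.snd = ν)
    (h₂f : S₂.map Prod.fst = ν) (h₂s : S₂.map Prod.snd = ρ) :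
    wassersteinCost d μ ρ ≤ ∫⁻ p, d p ∂S₁ + ∫⁻ p, d p ∂S₂ := by
  haveI := hS₁; haveI := hS₂
  haveI : IsProbabilityMeasure ν := by
    rw [← h₁s]; exact Measure.isProbabilityMeasure_map measurable_snd.aemeasurable
  haveI : Nonempty X := by
    by_contra h
    rw [not_nonempty_iff] at h
    have h1 : S₁ Set.univ = 1 := measure_univ
    simp [Set.univ_eq_empty_iff.mpr inferInstance] at h1
  have hswap : Measurable (Prod.swap : X × X → X × X) := measurable_swap
  set ξ : Measure (X × X) := S₁.map Prod.swap with hξ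
  haveI : IsProbabilityMeasure ξ := Measure.isProbabilityMeasure_map hswap.aemeasurable
  have hξfst : ξ.fst = ν := by
    rw [Measure.fst, hξ, Measure.map_map measurable_fst hswap,
      show (Prod.fst ∘ (Prod.swap : X × X → X × X)) = Prod.snd from rfl]
    exact h₁s
  have hξsnd : ξ.map Prod.snd = μ := by
    rw [hξ, Measure.map_map measurable_snd hswap,
      show (Prod.snd ∘ (Prod.swap : X × X → X × X)) = Prod.fst from rfl]
    exact h₁f
  have hηfst : S₂.fst = ν := h₂f
  set κ₁ := ξ.condKernel with hκ₁
  set κ₂ := S₂.condKernel with hκ₂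
  have hdis₁ : ν ⊗ₘ κ₁ = ξ := by rw [← hξfst, hκ₁]; exact ξ.disintegrate _
  have hdis₂ : ν ⊗ₘ κ₂ = S₂ := by rw [← hηfst, hκ₂]; exact S₂.disintegrate _
  set κ : Kernel X (X × X) := κ₁ ×ₖ κ₂ with hκ
  haveI : IsMarkovKernel κ := by rw [hκ]; infer_instance
  set T : Measure (X × (X × X)) := ν ⊗ₘ κ with hT
  haveI : IsProbabilityMeasure T := by rw [hT]; infer_instance
  set SS : Measure (X × X) := T.map Prod.snd with hSS
  haveI hSSprob : IsProbabilityMeasure SS := Measure.isProbabilityMeasure_map measurable_snd.aemeasurable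
  have hκapp : ∀ y, κ y = (κ₁ y).prod (κ₂ y) := fun y => Kernel.prod_apply κ₁ κ₂ y
  -- first marginal
  have hmfst : SS.map Prod.fst = μ := by
    rw [hSS, Measure.map_map measurable_fst measurable_snd, ← hξsnd, ← hdis₁]
    ext s hs
    rw [Measure.map_apply (measurable_fst.comp measurable_snd) hs,
      Measure.map_apply measurable_snd hs, hT,
      Measure.compProd_apply ((measurable_fst.comp measurable_snd) hs),
      Measure.compProd_apply (measurable_snd hs)]
    refine lintegral_congr fun y => ?_
    have : (Prod.mk y ⁻¹' ((Prod.fst ∘ Prod.snd) ⁻¹' s)) = (Prod.fst ⁻¹' s : Set (X × X)) := rfl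
    rw [this, hκapp y]
    have : (Prod.fst ⁻¹' s : Set (X × X)) = s ×ˢ Set.univ := by ext p; simp
    rw [this, Measure.prod_prod]
    simp
    rfl
  -- second marginal
  have hmsnd : SS.map Prod.snd = ρ := by
    rw [hSS, Measure.map_map measurable_snd measurable_snd, ← h₂s, ← hdis₂]
    ext s hs
    rw [Measure.map_apply (measurable_snd.comp measurable_snd) hs,
      Measure.map_apply measurable_snd hs, hT,
      Measure.compProd_apply ((measurable_snd.comp measurable_snd) hs),
      Measure.compProd_apply (measurable_snd hs)]
    refine lintegral_congr fun y => ?_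
    have : (Prod.mk y ⁻¹' ((Prod.snd ∘ Prod.snd) ⁻¹' s)) = (Prod.snd ⁻¹' s : Set (X × X)) := rfl
    rw [this, hκapp y]
    have : (Prod.snd ⁻¹' s : Set (X × X)) = Set.univ ×ˢ s := by ext p; simp
    rw [this, Measure.prod_prod]
    simp
  refine le_trans (wassersteinCost_le_coupling d SS hSSprob hmfst hmsnd) ?_
  -- cost estimate
  have hmeas₁ : Measurable fun q : X × X => d (q.2, q.1) := hd.comp hswap
  have cost_calc : ∫⁻ p, d p ∂SS ≤
      (∫⁻ q, d (q.2, q.1) ∂(ν ⊗ₘ κ₁)) + ∫⁻ q, d q ∂(ν ⊗ₘ κ₂) := by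
    rw [hSS, lintegral_map hd measurable_snd, hT,
      Measure.lintegral_compProd (show Measurable fun q : X × (X × X) => d q.2 from hd.comp measurable_snd)]
    have step1 : ∀ y, ∫⁻ p, d p ∂(κ y) ≤
        (∫⁻ a, d (a, y) ∂(κ₁ y)) + ∫⁻ c, d (y, c) ∂(κ₂ y) := by
      intro y
      rw [hκapp y]
      calc ∫⁻ p, d p ∂((κ₁ y).prod (κ₂ y))
          ≤ ∫⁻ p, d (p.1, y) + d (y, p.2) ∂((κ₁ y).prod (κ₂ y)) :=
            lintegral_mono fun p => h_triangle p.1 y p.2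
        _ = (∫⁻ p, d (p.1, y) ∂((κ₁ y).prod (κ₂ y)))
              + ∫⁻ p, d (y, p.2) ∂((κ₁ y).prod (κ₂ y)) := by
            exact lintegral_add_left
              (hd.comp (measurable_fst.prodMk measurable_const)) _
        _ = (∫⁻ a, d (a, y) ∂(κ₁ y)) + ∫⁻ c, d (y, c) ∂(κ₂ y) := by
            congr 1
            · conv_rhs => rw [← Measure.fst_prod (μ := κ₁ y) (ν := κ₂ y)]
              rw [Measure.fst, lintegral_map
                (show Measurable fun a : X => d (a, y) from
                  hd.comp (measurable_id.prodMk measurable_const)) measurable_fst]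
            · conv_rhs => rw [← Measure.snd_prod (μ := κ₁ y) (ν := κ₂ y)]
              rw [Measure.snd, lintegral_map
                (show Measurable fun c : X => d (y, c) from
                  hd.comp (measurable_const.prodMk measurable_id)) measurable_snd]
    calc ∫⁻ y, ∫⁻ p, d p ∂(κ y) ∂ν
        ≤ ∫⁻ y, ((∫⁻ a, d (a, y) ∂(κ₁ y)) + ∫⁻ c, d (y, c) ∂(κ₂ y)) ∂ν :=
          lintegral_mono step1
      _ = (∫⁻ y, ∫⁻ a, d (a, y) ∂(κ₁ y) ∂ν) + ∫⁻ y, ∫⁻ c, d (y, c) ∂(κ₂ y) ∂ν := by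
          exact lintegral_add_left
            (Measurable.lintegral_kernel_prod_right' (κ := κ₁) hmeas₁) _
      _ = (∫⁻ q, d (q.2, q.1) ∂(ν ⊗ₘ κ₁)) + ∫⁻ q, d q ∂(ν ⊗ₘ κ₂) := by
          rw [Measure.lintegral_compProd hmeas₁, Measure.lintegral_compProd hd]
  refine le_trans cost_calc (le_of_eq ?_)
  congr 1
  · rw [hdis₁, hξ, lintegral_map hmeas₁ hswap]
    exact lintegral_congr fun p => rfl
  · rw [hdis₂]

/-- the Wasserstein cost of an extended-valued measurable pseudometric
is a pseudometric on Borel probability measures on a Polish space. -/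
theorem wassersteinCost_pseudometric
    {X : Type*} [TopologicalSpace X] [PolishSpace X] [MeasurableSpace X] [BorelSpace X]
    (d : X × X → ℝ≥0∞) (hd : Measurable d)
    (h_refl : ∀ x, d (x, x) = 0)
    (h_symm : ∀ x x', d (x, x') = d (x', x))
    (h_triangle : ∀ x x' x'', d (x, x'') ≤ d (x, x') + d (x', x'')) :
    (∀ μ : Measure X, IsProbabilityMeasure μ → wassersteinCost d μ μ = 0) ∧
    (∀ μ ν : Measure X, IsProbabilityMeasure μ → IsProbabilityMeasure ν →
      wassersteinCost d μ ν = wassersteinCost d ν μ) ∧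
    (∀ μ ν ρ : Measure X, IsProbabilityMeasure μ → IsProbabilityMeasure ν →
      IsProbabilityMeasure ρ →
      wassersteinCost d μ ρ ≤ wassersteinCost d μ ν + wassersteinCost d ν ρ) := by
  refine ⟨?_, ?_, ?_⟩
  · -- reflexivity
    intro μ hμ
    haveI := hμ
    have hdiag : Measurable fun x : X => (x, x) := measurable_id.prodMk measurable_id
    refine le_antisymm ?_ zero_le
    refine le_trans (wassersteinCost_le_coupling d (μ.map fun x => (x, x))
      (Measure.isProbabilityMeasure_map hdiag.aemeasurable) ?_ ?_) ?_
    · rw [Measure.map_map measurable_fst hdiag,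
        show (Prod.fst ∘ fun x : X => (x, x)) = id from rfl, Measure.map_id]
    · rw [Measure.map_map measurable_snd hdiag,
        show (Prod.snd ∘ fun x : X => (x, x)) = id from rfl, Measure.map_id]
    · rw [lintegral_map hd hdiag]
      simp [h_refl]
  · -- symmetry
    intro μ ν hμ hν
    exact le_antisymm (wassersteinCost_symm_le d hd h_symm μ ν)
      (wassersteinCost_symm_le d hd h_symm ν μ)
  · -- triangle inequality
    intro μ ν ρ hμ hν hρ
    have hrhs : wassersteinCost d μ ν + wassersteinCost d ν ρ =
        ⨅ (S₁ : Measure (X × X)) (_ : IsProbabilityMeasure S₁)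
          (_ : S₁.map Prod.fst = μ) (_ : S₁.map Prod.snd = ν)
          (S₂ : Measure (X × X)) (_ : IsProbabilityMeasure S₂)
          (_ : S₂.map Prod.fst = ν) (_ : S₂.map Prod.snd = ρ),
          ((∫⁻ p, d p ∂S₁) + ∫⁻ p, d p ∂S₂) := by
      simp_rw [wassersteinCost, ENNReal.iInf_add, ENNReal.add_iInf]
    rw [hrhs]
    refine le_iInf fun S₁ => le_iInf fun h₁ => le_iInf fun h₁f => le_iInf fun h₁s =>
      le_iInf fun S₂ => le_iInf fun h₂ => le_iInf fun h₂f => le_iInf fun h₂s => ?_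
    exact wassersteinCost_glue d hd h_triangle S₁ S₂ h₁ h₂ h₁f h₁s h₂f h₂s
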